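/- Let φ: ℝ^d → ℝ be differentiable, let Z = ∑_{z∈ℤ^d} e^{−φ(z)} be finite and positive, and define π̄(x) = (1/Z) · 2e^{−φ([x])} / (1 + exp(2⟨x − [x], ∇φ([x])⟩)), where [x] is the coordinate-wise rounding of x. Then π̄ is a probability density function: ∫_{ℝ^d} π̄(x) dx = 1. -/

import Mathlib

open Real MeasureTheory
open scoped RealInnerProductSpace

/-- Coordinate-wise rounding of a vector in `ℝ^d` to the nearest integer point. -/
noncomputable def roundVec {d : ℕ} (x : EuclideanSpace ℝ (Fin d)) :
    EuclideanSpace ℝ (Fin d) :=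
  WithLp.toLp 2 (fun i => (round (x i) : ℝ))

namespace Stmt5Aux

variable {d : ℕ}

/-- The integer point `z` as a vector. -/
noncomputable def zv (z : Fin d → ℤ) : EuclideanSpace ℝ (Fin d) := WithLp.toLp 2 (fun i => (z i : ℝ))

/-- The half-open cube of points rounding to `z`. -/
def cube (z : Fin d → ℤ) : Set (EuclideanSpace ℝ (Fin d)) := {x | ∀ i, round (x i) = z i}

/-- Half-open unit cube centered at the origin. -/
def Ic : Set (EuclideanSpace ℝ (Fin d)) := {x | ∀ i, x i ∈ Set.Ico (-(1/2) : ℝ) (1/2)}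

/-- Closed unit cube centered at the origin. -/
def Kc : Set (EuclideanSpace ℝ (Fin d)) := {x | ∀ i, x i ∈ Set.Icc (-(1/2) : ℝ) (1/2)}

lemma round_eq_iff' (r : ℝ) (n : ℤ) :
    round r = n ↔ r - n ∈ Set.Ico (-(1/2) : ℝ) (1/2) := by
  rw [round_eq, Int.floor_eq_iff, Set.mem_Ico]
  constructor <;> rintro ⟨h1, h2⟩ <;> constructor <;> push_cast at * <;> linarith

lemma cube_eq (z : Fin d → ℤ) : cube z = (fun x => x - zv z) ⁻¹' Ic := by
  ext x
  simp only [cube, Ic, Set.mem_setOf_eq, Set.mem_preimage]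
  refine forall_congr' fun i => ?_
  rw [round_eq_iff']
  have : (x - zv z) i = x i - (z i : ℝ) := rfl
  rw [this]

lemma mcoord (i : Fin d) : Measurable fun x : EuclideanSpace ℝ (Fin d) => x i :=
  (measurable_pi_apply i).comp ((MeasurableEquiv.toLp 2 (Fin d → ℝ)).symm).measurable

lemma ccoord (i : Fin d) : Continuous fun x : EuclideanSpace ℝ (Fin d) => x i := by
  have : (fun x : EuclideanSpace ℝ (Fin d) => x i)
      = (fun y : Fin d → ℝ => y i) ∘ (EuclideanSpace.equiv (Fin d) ℝ) := rfl
  rw [this]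
  exact (continuous_apply i).comp (EuclideanSpace.equiv (Fin d) ℝ).continuous_toFun

lemma measurableSet_Ic : MeasurableSet (Ic (d := d)) := by
  have : Ic (d := d) = ⋂ i, (fun x => x i) ⁻¹' Set.Ico (-(1/2) : ℝ) (1/2) := by
    ext x; simp [Ic]
  rw [this]
  exact MeasurableSet.iInter fun i => (mcoord i) measurableSet_Ico

lemma measurableSet_Kc : MeasurableSet (Kc (d := d)) := by
  have : Kc (d := d) = ⋂ i, (fun x => x i) ⁻¹' Set.Icc (-(1/2) : ℝ) (1/2) := by
    ext x; simp [Kc]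
  rw [this]
  exact MeasurableSet.iInter fun i => (mcoord i) measurableSet_Icc

lemma measurableSet_cube (z : Fin d → ℤ) : MeasurableSet (cube z) := by
  rw [cube_eq]
  exact measurableSet_Ic.preimage (measurable_id.sub measurable_const)

lemma disjoint_cube : Pairwise (Function.onFun Disjoint (cube (d := d))) := by
  intro z z' hzz'
  rw [Function.onFun, Set.disjoint_left]
  intro x hx hx'
  exact hzz' (funext fun i => (hx i).symm.trans (hx' i))

lemma iUnion_cube : (⋃ z, cube (d := d) z) = Set.univ := by
  ext x
  simp only [Set.mem_iUnion, Set.mem_univ, iff_true]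
  exact ⟨fun i => round (x i), fun i => rfl⟩

lemma measurePreserving_sub (c : EuclideanSpace ℝ (Fin d)) :
    MeasurePreserving (fun x : EuclideanSpace ℝ (Fin d) => x - c) volume volume := by
  simp only [sub_eq_add_neg]
  exact measurePreserving_add_right volume (-c)

lemma volume_Ic : volume (Ic (d := d)) = 1 := by
  have he : Ic (d := d) = ((MeasurableEquiv.toLp 2 (Fin d → ℝ)).symm) ⁻¹'
      (Set.pi Set.univ fun _ => Set.Ico (-(1/2) : ℝ) (1/2)) := by
    ext x
    simp only [Ic, Set.mem_setOf_eq, Set.mem_preimage, Set.mem_univ_pi]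
    exact Iff.rfl
  rw [he, (EuclideanSpace.volume_preserving_symm_measurableEquiv_toLp (Fin d)).measure_preimage
    ((MeasurableSet.univ_pi fun _ => measurableSet_Ico).nullMeasurableSet)]
  rw [volume_pi_pi]
  simp [Real.volume_Ico]
  norm_num

lemma volume_Kc : volume (Kc (d := d)) = 1 := by
  have he : Kc (d := d) = ((MeasurableEquiv.toLp 2 (Fin d → ℝ)).symm) ⁻¹'
      (Set.pi Set.univ fun _ => Set.Icc (-(1/2) : ℝ) (1/2)) := by
    ext x
    simp only [Kc, Set.mem_setOf_eq, Set.mem_preimage, Set.mem_univ_pi]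
    exact Iff.rfl
  rw [he, (EuclideanSpace.volume_preserving_symm_measurableEquiv_toLp (Fin d)).measure_preimage
    ((MeasurableSet.univ_pi fun _ => measurableSet_Icc).nullMeasurableSet)]
  rw [volume_pi_pi]
  simp [Real.volume_Icc]
  norm_num

lemma Ic_subset_Kc : Ic (d := d) ⊆ Kc := by
  intro x hx i
  exact ⟨(hx i).1, le_of_lt (hx i).2⟩

lemma Ic_ae_eq_Kc : Ic (d := d) =ᵐ[volume] Kc := by
  rw [Filter.eventuallyEq_set]
  have h1 : volume (Kc (d := d) \ Ic) = 0 := by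
    have := measure_diff (μ := volume) (Ic_subset_Kc (d := d))
      measurableSet_Ic.nullMeasurableSet (by rw [volume_Ic]; exact ENNReal.one_ne_top)
    rw [this, volume_Ic, volume_Kc, tsub_self]
  have h2 : ∀ᵐ x : EuclideanSpace ℝ (Fin d), x ∉ Kc \ Ic := by
    rw [ae_iff]; simpa only [not_not, Set.setOf_mem_eq] using h1
  filter_upwards [h2] with x hx
  simp only [Set.mem_diff, not_and, not_not] at hx
  exact ⟨fun h => Ic_subset_Kc h, fun h => hx h⟩

lemma isCompact_Kc : IsCompact (Kc (d := d)) := by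
  have he : Kc (d := d) = (EuclideanSpace.equiv (Fin d) ℝ).toHomeomorph ⁻¹'
      (Set.pi Set.univ fun _ => Set.Icc (-(1/2) : ℝ) (1/2)) := by
    ext x
    simp only [Kc, Set.mem_setOf_eq, Set.mem_preimage, Set.mem_univ_pi]
    exact Iff.rfl
  rw [he, Homeomorph.isCompact_preimage]
  exact isCompact_univ_pi fun _ => isCompact_Icc

lemma neg_preimage_Kc : (Neg.neg ⁻¹' Kc (d := d)) = Kc := by
  ext x
  simp only [Kc, Set.mem_preimage, Set.mem_setOf_eq]
  refine forall_congr' fun i => ?_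
  have : (-x : EuclideanSpace ℝ (Fin d)) i = -(x i) := rfl
  rw [this, Set.mem_Icc, Set.mem_Icc]
  constructor <;> rintro ⟨h1, h2⟩ <;> constructor <;> linarith

lemma continuous_f0 (g : EuclideanSpace ℝ (Fin d)) :
    Continuous fun u : EuclideanSpace ℝ (Fin d) => 2 / (1 + exp (2 * ⟪u, g⟫)) := by
  apply continuous_const.div
  · exact continuous_const.add ((continuous_const.mul
      (continuous_id.inner continuous_const)).rexp)
  · intro u; positivity

lemma integral_f0 (g : EuclideanSpace ℝ (Fin d)) :
    ∫ u in Kc, 2 / (1 + exp (2 * ⟪u, g⟫)) = 1 := by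
  set f : EuclideanSpace ℝ (Fin d) → ℝ := fun u => 2 / (1 + exp (2 * ⟪u, g⟫)) with hf
  have hc : Continuous f := continuous_f0 g
  have hInt : IntegrableOn f Kc := hc.continuousOn.integrableOn_compact isCompact_Kc
  have hIntneg : IntegrableOn (fun u => f (-u)) Kc :=
    (hc.comp continuous_neg).continuousOn.integrableOn_compact isCompact_Kc
  have hneg : ∫ u in Kc, f (-u) = ∫ u in Kc, f u := by
    have h := (Measure.measurePreserving_neg (volume : Measure (EuclideanSpace ℝ (Fin d)))).setIntegral_preimage_emb
      (MeasurableEquiv.neg (EuclideanSpace ℝ (Fin d))).measurableEmbedding f Kc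
    rw [show (Neg.neg ⁻¹' Kc (d := d)) = Kc from neg_preimage_Kc] at h
    exact h
  have hsum : ∀ u : EuclideanSpace ℝ (Fin d), f u + f (-u) = 2 := by
    intro u
    have hin : ⟪-u, g⟫ = -⟪u, g⟫ := inner_neg_left u g
    have h1 : (0:ℝ) < 1 + exp (2 * ⟪u, g⟫) := by positivity
    have h2 : (0:ℝ) < exp (2 * ⟪u, g⟫) := exp_pos _
    simp only [hf, hin]
    rw [mul_neg, exp_neg]
    field_simp
    ring
  have hIntAdd : ∫ u in Kc, (f u + f (-u)) = (∫ u in Kc, f u) + ∫ u in Kc, f (-u) :=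
    integral_add hInt hIntneg
  have hconst : ∫ u in Kc (d := d), (2:ℝ) = 2 := by
    rw [setIntegral_const, measureReal_def, volume_Kc]
    simp
  have h2 : (∫ u in Kc, f u) + ∫ u in Kc, f (-u) = 2 := by
    rw [← hIntAdd]
    simp only [hsum]
    exact hconst
  rw [hneg] at h2
  linarith

end Stmt5Aux

open Stmt5Aux

/-- The target density `π̄(x) = (1/Z)·2e^{−φ([x])}/(1 + exp(2⟪x−[x], ∇φ([x])⟫))` is a
probability density function: it integrates to 1 over `ℝ^d`. -/
theorem stmt5 {d : ℕ} (hd : 1 ≤ d) (φ : EuclideanSpace ℝ (Fin d) → ℝ)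
    (hdiff : Differentiable ℝ φ)
    (Z : ℝ)
    (hZ : Z = ∑' z : Fin d → ℤ, Real.exp (-φ (WithLp.toLp 2 (fun i => (z i : ℝ)))))
    (hZpos : 0 < Z)
    (pb : EuclideanSpace ℝ (Fin d) → ℝ)
    (hpb : ∀ x, pb x = (1 / Z) * (2 * Real.exp (-φ (roundVec x)) /
      (1 + Real.exp (2 * ⟪x - roundVec x, gradient φ (roundVec x)⟫)))) :
    ∫ x : EuclideanSpace ℝ (Fin d), pb x = 1 := by
  classical
  -- nonnegativity
  have hnn : ∀ x, 0 ≤ pb x := by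
    intro x
    rw [hpb x]
    positivity
  -- measurability of pb
  have hmround : Measurable (roundVec (d := d)) := by
    apply (WithLp.measurable_toLp 2 (Fin d → ℝ)).comp
    apply measurable_pi_lambda
    intro i
    have h1 : Measurable fun r : ℝ => (round r : ℝ) := by
      have : (fun r : ℝ => (round r : ℝ)) = (fun n : ℤ => (n : ℝ)) ∘ (round : ℝ → ℤ) := rfl
      rw [this]
      exact measurable_from_top.comp (by
        have : (round : ℝ → ℤ) = fun r => ⌊r + 1/2⌋ := funext fun r => round_eq r
        rw [this]
        exact Int.measurable_floor.comp (measurable_id.add_const _))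
    exact h1.comp (mcoord i)
  have hmgrad : Measurable (gradient φ) := by
    have := measurable_fderiv ℝ φ
    unfold gradient
    fun_prop
  have hmpb : Measurable pb := by
    have hpbeq : pb = fun x => (1 / Z) * (2 * Real.exp (-φ (roundVec x)) /
        (1 + Real.exp (2 * ⟪x - roundVec x, gradient φ (roundVec x)⟫))) := funext hpb
    rw [hpbeq]
    have hφm : Measurable φ := hdiff.continuous.measurable
    have hinner : Measurable fun x : EuclideanSpace ℝ (Fin d) =>
        ⟪x - roundVec x, gradient φ (roundVec x)⟫ :=
      (measurable_id.sub hmround).inner (hmgrad.comp hmround)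
    exact measurable_const.mul
      ((measurable_const.mul (Real.continuous_exp.measurable.comp ((hφm.comp hmround).neg))).div
        (measurable_const.add
          (Real.continuous_exp.measurable.comp (measurable_const.mul hinner))))
  -- summability
  have hsum : Summable fun z : Fin d → ℤ => Real.exp (-φ (WithLp.toLp 2 (fun i => (z i : ℝ)))) := by
    by_contra h
    rw [tsum_eq_zero_of_not_summable h] at hZ
    exact absurd hZ (ne_of_gt hZpos)
  -- per-cube value
  set G : (Fin d → ℤ) → EuclideanSpace ℝ (Fin d) := fun z => gradient φ (zv z) with hG
  set c : (Fin d → ℤ) → ℝ := fun z => (1 / Z) * Real.exp (-φ (zv z)) with hc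
  have hcnn : ∀ z, 0 ≤ c z := fun z => by rw [hc]; positivity
  have hcube : ∀ z : Fin d → ℤ, ∫⁻ x in cube z, ENNReal.ofReal (pb x) = ENNReal.ofReal (c z) := by
    intro z
    have hrv : ∀ x ∈ cube z, roundVec x = zv z := by
      intro x hx
      ext i
      simp only [roundVec, zv, hx i, WithLp.ofLp_toLp]
    set F : EuclideanSpace ℝ (Fin d) → ℝ :=
      fun x => c z * (2 / (1 + exp (2 * ⟪x - zv z, G z⟫))) with hF
    have hstep1 : ∫⁻ x in cube z, ENNReal.ofReal (pb x)
        = ∫⁻ x in cube z, ENNReal.ofReal (F x) := by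
      apply setLIntegral_congr_fun (measurableSet_cube z)
      intro x hx
      have hx' : pb x = F x := by
        rw [hpb x, hrv x hx, hF]
        simp only [hc, hG]
        ring
      simp only [hx']
    have hstep2 : ∫⁻ x in cube z, ENNReal.ofReal (F x)
        = ∫⁻ u in Ic, ENNReal.ofReal (c z * (2 / (1 + exp (2 * ⟪u, G z⟫)))) := by
      rw [cube_eq]
      have hemb : MeasurableEmbedding (fun x : EuclideanSpace ℝ (Fin d) => x - zv z) :=
        (MeasurableEquiv.subRight (zv z)).measurableEmbedding
      exact (measurePreserving_sub (zv z)).setLIntegral_comp_preimage_emb hemb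
        (fun u => ENNReal.ofReal (c z * (2 / (1 + exp (2 * ⟪u, G z⟫))))) Ic
    have hstep3 : ∫⁻ u in Ic, ENNReal.ofReal (c z * (2 / (1 + exp (2 * ⟪u, G z⟫))))
        = ∫⁻ u in Kc, ENNReal.ofReal (c z * (2 / (1 + exp (2 * ⟪u, G z⟫)))) :=
      setLIntegral_congr Ic_ae_eq_Kc
    have hIntOn : IntegrableOn (fun u => c z * (2 / (1 + exp (2 * ⟪u, G z⟫)))) Kc :=
      (continuous_const.mul (continuous_f0 (G z))).continuousOn.integrableOn_compact isCompact_Kc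
    have hstep4 : ∫⁻ u in Kc, ENNReal.ofReal (c z * (2 / (1 + exp (2 * ⟪u, G z⟫))))
        = ENNReal.ofReal (∫ u in Kc, c z * (2 / (1 + exp (2 * ⟪u, G z⟫)))) := by
      rw [ofReal_integral_eq_lintegral_ofReal hIntOn]
      filter_upwards with u
      positivity
    have hstep5 : ∫ u in Kc, c z * (2 / (1 + exp (2 * ⟪u, G z⟫))) = c z := by
      rw [integral_const_mul, integral_f0 (G z), mul_one]
    rw [hstep1, hstep2, hstep3, hstep4, hstep5]
  -- put it together
  have hlint : ∫⁻ x, ENNReal.ofReal (pb x) = 1 := by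
    rw [← setLIntegral_univ, ← iUnion_cube,
      lintegral_iUnion measurableSet_cube disjoint_cube]
    simp only [hcube]
    have hsummc : Summable c := by
      rw [hc]; exact hsum.mul_left (1 / Z)
    rw [← ENNReal.ofReal_tsum_of_nonneg hcnn hsummc]
    have : ∑' z : Fin d → ℤ, c z = 1 := by
      rw [hc]
      simp only
      rw [tsum_mul_left]
      have : (∑' z : Fin d → ℤ, Real.exp (-φ (zv z))) = Z := by
        rw [hZ]; rfl
      rw [this]
      field_simp
    rw [this, ENNReal.ofReal_one]
  rw [integral_eq_lintegral_of_nonneg_ae (Filter.Eventually.of_forall hnn)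
    hmpb.aestronglyMeasurable, hlint]
  simp
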